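/- arXiv:2011.03030 — 2 statements merged into one kernel-verified Lean document; each statement's English description precedes it below -/
import Mathlib

section
/- Let F ⊆ [ℝ^p → ℝ^d] be a hypothesis class and Π_F = {π_f : f ∈ F} the induced plug-in policy class. Then the Natarajan dimension of Π_F is at most the VC-linear-subgraph dimension of F. -/
open MeasureTheory Real Set
open scoped InnerProductSpace ENNReal NNReal

noncomputable section

/-- `ℝ^k` with the Euclidean norm. -/
abbrev Euc (k : ℕ) : Type := EuclideanSpace ℝ (Fin k)

/-- `Z` is a polyhedron: the solution set of finitely many linear inequalities `Az ≤ b`. -/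
def IsPolyhedron {d : ℕ} (Z : Set (Euc d)) : Prop :=
  ∃ (m : ℕ) (A : Fin m → Euc d) (b : Fin m → ℝ), Z = {z | ∀ i, ⟪A i, z⟫_ℝ ≤ b i}

/-- The class `P` Natarajan-shatters `m` points: there are points `x i` and labels
`s i ≠ s' i` such that every pattern in `{0,1}^m` is realized by some `g ∈ P` taking
values in `{s i, s' i}` at each `x i`. -/
def NatShatters {α β : Type*} (P : Set (α → β)) (m : ℕ) : Prop :=
  ∃ (x : Fin m → α) (s s' : Fin m → β), (∀ i, s i ≠ s' i) ∧
    ∀ σ : Fin m → Bool, ∃ g ∈ P, ∀ i, g (x i) = if σ i then s i else s' i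

/-- The Natarajan dimension of `P` is at most `η`. -/
def NatDimLE {α β : Type*} (P : Set (α → β)) (η : ℕ) : Prop :=
  ∀ m, NatShatters P m → m ≤ η

/-- The class `F` VC-linear-subgraph-shatters `m` points `(x i, β i, t i)`:
every sign pattern of `1{β iᵀ f (x i) ≤ t i}` is realized by some `f ∈ F`. -/
def VCLShatters {p d : ℕ} (F : Set (Euc p → Euc d)) (m : ℕ) : Prop :=
  ∃ (x : Fin m → Euc p) (β : Fin m → Euc d) (t : Fin m → ℝ),
    ∀ σ : Fin m → Bool, ∃ f ∈ F, ∀ i, (⟪β i, f (x i)⟫_ℝ ≤ t i ↔ σ i = true)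

/-- The VC-linear-subgraph dimension of `F` is at most `ν`. -/
def VCLDimLE {p d : ℕ} (F : Set (Euc p → Euc d)) (ν : ℕ) : Prop :=
  ∀ m, VCLShatters F m → m ≤ ν

/-- `g` is the plug-in policy for `f` with ties broken consistently according to the
ordering `tb` on the extreme points of `Z`: `g x` is an extreme point of `Z` minimizing
`f(x)ᵀ z` over `z ∈ Z`, and among all extreme-point minimizers it is `tb`-minimal. -/
def IsPluginPolicy {p d : ℕ} (Z : Set (Euc d)) (tb : Euc d → ℕ) (f g : Euc p → Euc d) : Prop :=
  ∀ x, g x ∈ Set.extremePoints ℝ Z ∧ (∀ z ∈ Z, ⟪f x, g x⟫_ℝ ≤ ⟪f x, z⟫_ℝ) ∧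
    ∀ z ∈ Set.extremePoints ℝ Z, (∀ z' ∈ Z, ⟪f x, z⟫_ℝ ≤ ⟪f x, z'⟫_ℝ) → tb (g x) ≤ tb z

/-- Key lemma: for two extreme points `a, b` with `tb a < tb b`, if the plug-in policy
value `g x` lies in `{a, b}`, then `g x = a` iff `⟪a - b, f x⟫ ≤ 0`. -/
lemma plugin_key {p d : ℕ} (Z : Set (Euc d)) (tb : Euc d → ℕ) (f g : Euc p → Euc d)
    (hg : IsPluginPolicy Z tb f g) (x : Euc p) (a b : Euc d)
    (ha : a ∈ Set.extremePoints ℝ Z) (hb : b ∈ Set.extremePoints ℝ Z)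
    (hab : tb a < tb b) (hgx : g x = a ∨ g x = b) :
    ⟪a - b, f x⟫_ℝ ≤ 0 ↔ g x = a := by
  obtain ⟨hext, hmin, htie⟩ := hg x
  have haZ : a ∈ Z := extremePoints_subset ha
  have hbZ : b ∈ Z := extremePoints_subset hb
  rw [inner_sub_left, sub_nonpos, real_inner_comm (f x) a, real_inner_comm (f x) b]
  constructor
  · intro h
    rcases hgx with h1 | h1
    · exact h1
    · exfalso
      have h2 : ⟪f x, b⟫_ℝ ≤ ⟪f x, a⟫_ℝ := h1 ▸ hmin a haZ
      have h3 : ∀ z' ∈ Z, ⟪f x, a⟫_ℝ ≤ ⟪f x, z'⟫_ℝ := fun z' hz' =>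
        le_trans h (h1 ▸ hmin z' hz')
      have h4 := htie a ha h3
      rw [h1] at h4
      omega
  · intro h
    rw [← h]
    exact hmin b hbZ

/-- The Natarajan dimension of the induced plug-in policy class
`Π_F = {π_f : f ∈ F}` is at most the VC-linear-subgraph dimension of `F`. -/
theorem natarajan_dim_plugin_le_vc_linear_subgraph_dim
    {p d : ℕ} (Z : Set (Euc d)) (tb : Euc d → ℕ) (F : Set (Euc p → Euc d)) (ν : ℕ)
    (hZ : IsPolyhedron Z)
    (hfin : (Set.extremePoints ℝ Z).Finite)
    (htb : Set.InjOn tb (Set.extremePoints ℝ Z))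
    (hdim : VCLDimLE F ν) :
    NatDimLE {g : Euc p → Euc d | ∃ f ∈ F, IsPluginPolicy Z tb f g} ν := by
  intro m hsh
  obtain ⟨x, s, s', hne, hσ⟩ := hsh
  obtain ⟨g1, ⟨f1, hf1, hp1⟩, hg1⟩ := hσ (fun _ => true)
  obtain ⟨g0, ⟨f0, hf0, hp0⟩, hg0⟩ := hσ (fun _ => false)
  have hsE : ∀ i, s i ∈ Set.extremePoints ℝ Z := fun i => by
    have h := (hp1 (x i)).1
    have := hg1 i
    simp only [if_true] at this
    rwa [this] at h
  have hs'E : ∀ i, s' i ∈ Set.extremePoints ℝ Z := fun i => by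
    have h := (hp0 (x i)).1
    have := hg0 i
    simp only [Bool.false_eq_true, if_false] at this
    rwa [this] at h
  apply hdim m
  refine ⟨x, fun i => if tb (s i) < tb (s' i) then s i - s' i else s' i - s i,
    fun _ => 0, ?_⟩
  intro σ
  set τ : Fin m → Bool := fun i => if tb (s i) < tb (s' i) then σ i else !σ i with hτdef
  obtain ⟨g, ⟨f, hfF, hpol⟩, hg⟩ := hσ τ
  refine ⟨f, hfF, fun i => ?_⟩
  have hgx : g (x i) = s i ∨ g (x i) = s' i := by
    rw [hg i]; cases τ i <;> simp
  by_cases hc : tb (s i) < tb (s' i)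
  · have hτ : τ i = σ i := if_pos hc
    simp only [hc, if_true]
    rw [plugin_key Z tb f g hpol (x i) (s i) (s' i) (hsE i) (hs'E i) hc hgx,
      hg i, hτ]
    cases hσi : σ i <;> simp [hne i, (hne i).symm]
  · have hlt : tb (s' i) < tb (s i) := by
      have hne' : tb (s i) ≠ tb (s' i) := fun h => hne i (htb (hsE i) (hs'E i) h)
      omega
    have hτ : τ i = !σ i := if_neg hc
    simp only [hc, if_false]
    rw [plugin_key Z tb f g hpol (x i) (s' i) (s i) (hs'E i) (hsE i) hlt hgx.symm,
      hg i, hτ]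
    cases hσi : σ i <;> simp [hne i, (hne i).symm]
end
end

section
/- Suppose the noise condition holds with parameters α, γ ≥ 0 and P(|Z*(X)| > 1) = 0. For policies π taking values in Z∠, define d(π*,π) = (1/B)·E_X[f*(X)^⊤(π(X) − π*(X))] and d_Δ(π*,π) = P_X(π(X) ≠ π*(X)). Then for every such policy π: (i) d(π*,π) ≤ 2·d_Δ(π*,π), and (ii) d_Δ(π*,π) ≤ c_1·d(π*,π)^{α/(α+1)}, where c_1 = (α·γ^α)^{−α/(α+1)}·(α+1)·γ^α. -/
open MeasureTheory Real Set
open scoped InnerProductSpace ENNReal NNReal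

noncomputable section

/-- `f` is (a version of) the conditional mean `E[Y ∣ X]`, where `μ` is the joint law of
`(X, Y)`: `f` is measurable and `E[Y ; X ∈ s] = E[f(X) ; X ∈ s]` for every measurable `s`. -/
def IsCondMean {p d : ℕ} (μ : Measure (Euc p × Euc d)) (f : Euc p → Euc d) : Prop :=
  Measurable f ∧ ∀ s : Set (Euc p), MeasurableSet s →
    ∫ xy in Prod.fst ⁻¹' s, xy.2 ∂μ = ∫ xy in Prod.fst ⁻¹' s, f xy.1 ∂μ

/-- `g` is a plug-in policy for `f`: `g x` is an extreme point of `Z` minimizing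
`f(x)ᵀ z` over `z ∈ Z`. -/
def IsOptPolicy {p d : ℕ} (Z : Set (Euc d)) (f g : Euc p → Euc d) : Prop :=
  ∀ x, g x ∈ Set.extremePoints ℝ Z ∧ ∀ z ∈ Z, ⟪f x, g x⟫_ℝ ≤ ⟪f x, z⟫_ℝ

/-- The set of optimal solutions `Z*(x) = argmin_{z ∈ Z} f(x)ᵀ z`. -/
def optSet {p d : ℕ} (Z : Set (Euc d)) (f : Euc p → Euc d) (x : Euc p) : Set (Euc d) :=
  {z ∈ Z | ∀ z' ∈ Z, ⟪f x, z⟫_ℝ ≤ ⟪f x, z'⟫_ℝ}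

open Classical in
/-- The suboptimality gap `Δ(x)`: the difference between the best objective value among
non-optimal extreme points and the optimal value, with `Δ(x) = 0` when `Z*(x) = Z`. -/
def gapFn {p d : ℕ} (Z : Set (Euc d)) (f : Euc p → Euc d) (x : Euc p) : ℝ :=
  if optSet Z f x = Z then 0
  else sInf ((fun z => ⟪f x, z⟫_ℝ) '' (Set.extremePoints ℝ Z \ optSet Z f x))
        - sInf ((fun z => ⟪f x, z⟫_ℝ) '' Z)

/-- The noise (margin) condition with parameters `α, γ`:
`P(0 < Δ(X) ≤ δ) ≤ (γ δ / B)^α` for all `δ > 0`. -/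
def NoiseCondition {p d : ℕ} (Z : Set (Euc d)) (B : ℝ)
    (μ : Measure (Euc p × Euc d)) (fstar : Euc p → Euc d) (α γ : ℝ) : Prop :=
  ∀ δ : ℝ, 0 < δ →
    μ {xy | 0 < gapFn Z fstar xy.1 ∧ gapFn Z fstar xy.1 ≤ δ}
      ≤ ENNReal.ofReal ((γ * δ / B) ^ α)

lemma coord_abs_le_norm {d : ℕ} (y : Euc d) (i : Fin d) : |y i| ≤ ‖y‖ := by
  rw [EuclideanSpace.norm_eq]
  have h0 : ‖y i‖^2 ≤ ∑ j, ‖y j‖^2 :=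
    Finset.single_le_sum (f := fun j => ‖y j‖^2) (fun j _ => sq_nonneg _) (Finset.mem_univ i)
  calc |y i| = √(‖y i‖^2) := by rw [Real.norm_eq_abs, Real.sqrt_sq_eq_abs, abs_abs]
    _ ≤ √(∑ j, ‖y j‖^2) := Real.sqrt_le_sqrt h0

lemma ae_lin_le_one {p d : ℕ} (μ : Measure (Euc p × Euc d)) [IsProbabilityMeasure μ]
    {fstar : Euc p → Euc d} (hf : IsCondMean μ fstar) (hY : ∀ᵐ xy ∂μ, ‖xy.2‖ ≤ 1)
    (L : Euc d →L[ℝ] ℝ) (hL : ∀ y : Euc d, |L y| ≤ ‖y‖) :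
    ∀ᵐ xy ∂μ, L (fstar xy.1) ≤ 1 := by
  have hmf := hf.1
  have hmeasg : Measurable fun x => L (fstar x) := L.measurable.comp hmf
  have key : ∀ ε : ℝ, 0 < ε → ∀ n : ℕ,
      μ (Prod.fst ⁻¹' {x | 1 + ε ≤ L (fstar x) ∧ ‖fstar x‖ ≤ n}) = 0 := by
    intro ε hε n
    set s : Set (Euc p) := {x | 1 + ε ≤ L (fstar x) ∧ ‖fstar x‖ ≤ n} with hs
    have hsm : MeasurableSet s := by
      have h1 : MeasurableSet {x : Euc p | 1 + ε ≤ L (fstar x)} :=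
        measurableSet_le measurable_const hmeasg
      have h2 : MeasurableSet {x : Euc p | ‖fstar x‖ ≤ n} :=
        measurableSet_le hmf.norm measurable_const
      exact (h1.inter h2)
    set T : Set (Euc p × Euc d) := Prod.fst ⁻¹' s with hT
    have hTm : MeasurableSet T := measurable_fst hsm
    have hYint : Integrable (fun xy : Euc p × Euc d => xy.2) (μ.restrict T) :=
      Integrable.mono' (integrable_const 1) measurable_snd.aestronglyMeasurable
        (ae_restrict_of_ae hY)
    have hfint : Integrable (fun xy : Euc p × Euc d => fstar xy.1) (μ.restrict T) := by
      refine Integrable.mono' (integrable_const (n : ℝ))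
        ((hmf.comp measurable_fst).aestronglyMeasurable) ?_
      filter_upwards [ae_restrict_mem hTm] with xy hxy
      exact hxy.2
    have heq := hf.2 s hsm
    have h1 : ∫ xy in T, L xy.2 ∂μ = ∫ xy in T, L (fstar xy.1) ∂μ := by
      rw [L.integral_comp_comm hYint, L.integral_comp_comm hfint]
      rw [heq]
    have hM0 : μ T ≠ ⊤ := measure_ne_top μ T
    have h2 : (1 + ε) * (μ T).toReal ≤ ∫ xy in T, L (fstar xy.1) ∂μ := by
      refine setIntegral_ge_of_const_le_real hTm hM0 (fun xy hxy => hxy.1) ?_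
      exact L.integrable_comp hfint
    have h3 : ∫ xy in T, L xy.2 ∂μ ≤ (μ T).toReal := by
      calc ∫ xy in T, L xy.2 ∂μ ≤ ∫ _ in T, (1 : ℝ) ∂μ := by
            refine integral_mono_ae (L.integrable_comp hYint) (integrable_const 1) ?_
            filter_upwards [ae_restrict_of_ae hY] with xy h
            exact le_trans (le_abs_self _) (le_trans (hL _) h)
        _ = (μ T).toReal := by simp [setIntegral_const, Measure.real]
    have hM : (μ T).toReal = 0 := by nlinarith [ENNReal.toReal_nonneg (a := μ T)]
    exact (ENNReal.toReal_eq_zero_iff _).1 hM |>.resolve_right hM0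
  have hnull : μ {xy : Euc p × Euc d | 1 < L (fstar xy.1)} = 0 := by
    refine measure_mono_null (fun xy hxy => ?_) (?_ :
      μ (⋃ (m : ℕ) (n : ℕ),
        Prod.fst ⁻¹' {x | 1 + 1/((m:ℝ)+1) ≤ L (fstar x) ∧ ‖fstar x‖ ≤ n}) = 0)
    · obtain ⟨m, hm⟩ := exists_nat_one_div_lt (K := ℝ) (sub_pos.2 hxy)
      refine Set.mem_iUnion.2 ⟨m, Set.mem_iUnion.2 ⟨⌈‖fstar xy.1‖⌉₊, ?_, Nat.le_ceil _⟩⟩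
      show (1:ℝ) + 1/((m:ℝ)+1) ≤ L (fstar xy.1)
      linarith
    · rw [measure_iUnion_null_iff]
      intro m
      rw [measure_iUnion_null_iff]
      intro n
      exact key (1/((m:ℝ)+1)) (by positivity) n
  rw [ae_iff]
  simpa [not_le] using hnull

lemma ae_norm_fstar_le {p d : ℕ} (μ : Measure (Euc p × Euc d)) [IsProbabilityMeasure μ]
    {fstar : Euc p → Euc d} (hf : IsCondMean μ fstar) (hY : ∀ᵐ xy ∂μ, ‖xy.2‖ ≤ 1) :
    ∀ᵐ xy ∂μ, ‖fstar xy.1‖ ≤ Real.sqrt d := by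
  have h1 : ∀ i : Fin d, ∀ᵐ xy ∂μ, fstar xy.1 i ≤ 1 := by
    intro i
    have := ae_lin_le_one μ hf hY (EuclideanSpace.proj i)
      (fun y => by simpa using coord_abs_le_norm y i)
    filter_upwards [this] with xy h
    exact h
  have h2 : ∀ i : Fin d, ∀ᵐ xy ∂μ, -(1:ℝ) ≤ fstar xy.1 i := by
    intro i
    have := ae_lin_le_one μ hf hY (-(EuclideanSpace.proj i))
      (fun y => by simpa [abs_neg] using coord_abs_le_norm y i)
    filter_upwards [this] with xy h
    have h' : -(fstar xy.1 i) ≤ 1 := h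
    linarith
  filter_upwards [ae_all_iff.2 h1, ae_all_iff.2 h2] with xy ha hb
  rw [EuclideanSpace.norm_eq]
  have : ∑ j, ‖fstar xy.1 j‖^2 ≤ (d : ℝ) := by
    calc ∑ j, ‖fstar xy.1 j‖^2 ≤ ∑ _j : Fin d, (1:ℝ) := by
          refine Finset.sum_le_sum fun j _ => ?_
          rw [Real.norm_eq_abs, ← one_pow 2]
          exact pow_le_pow_left₀ (abs_nonneg _) (abs_le.2 ⟨hb j, ha j⟩) 2
      _ = (d : ℝ) := by simp
  exact Real.sqrt_le_sqrt this

lemma integral_inner_finrange {p d : ℕ} (μ : Measure (Euc p × Euc d)) [IsFiniteMeasure μ]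
    (w : Euc p × Euc d → Euc d) (hw : Integrable w μ) (h : Euc p → Euc d)
    (hmh : Measurable h) (F : Finset (Euc d)) (hh : ∀ x, h x ∈ F) :
    ∫ xy, ⟪w xy, h xy.1⟫_ℝ ∂μ
      = ∑ v ∈ F, ⟪v, ∫ xy in Prod.fst ⁻¹' (h ⁻¹' {v}), w xy ∂μ⟫_ℝ := by
  classical
  have hpt : ∀ xy : Euc p × Euc d, ⟪w xy, h xy.1⟫_ℝ
      = ∑ v ∈ F, Set.indicator (Prod.fst ⁻¹' (h ⁻¹' {v})) (fun xy => ⟪v, w xy⟫_ℝ) xy := by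
    intro xy
    have : ∀ v ∈ F, Set.indicator (Prod.fst ⁻¹' (h ⁻¹' {v})) (fun xy => ⟪v, w xy⟫_ℝ) xy
        = if h xy.1 = v then ⟪v, w xy⟫_ℝ else 0 := by
      intro v _
      simp [Set.indicator_apply]
    rw [Finset.sum_congr rfl this, Finset.sum_ite_eq F (h xy.1) (fun v => ⟪v, w xy⟫_ℝ),
      if_pos (hh _), real_inner_comm]
  calc ∫ xy, ⟪w xy, h xy.1⟫_ℝ ∂μ
      = ∫ xy, ∑ v ∈ F,
          Set.indicator (Prod.fst ⁻¹' (h ⁻¹' {v})) (fun xy => ⟪v, w xy⟫_ℝ) xy ∂μ := by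
        exact integral_congr_ae (Filter.Eventually.of_forall hpt)
    _ = ∑ v ∈ F, ∫ xy,
          Set.indicator (Prod.fst ⁻¹' (h ⁻¹' {v})) (fun xy => ⟪v, w xy⟫_ℝ) xy ∂μ := by
        refine integral_finset_sum F fun v _ => ?_
        exact (hw.const_inner v).indicator (measurable_fst (hmh (measurableSet_singleton v)))
    _ = ∑ v ∈ F, ⟪v, ∫ xy in Prod.fst ⁻¹' (h ⁻¹' {v}), w xy ∂μ⟫_ℝ := by
        refine Finset.sum_congr rfl fun v _ => ?_
        rw [integral_indicator (measurable_fst (hmh (measurableSet_singleton v)))]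
        exact integral_inner hw.restrict v

/-- Comparison of the regret pseudo-distance
`d(π*,π) = (1/B) E_X[f*(X)ᵀ(π(X) − π*(X))]` and the disagreement probability
`d_Δ(π*,π) = P_X(π(X) ≠ π*(X))` under the noise condition with a.s. unique optima:
`d ≤ 2 d_Δ` and `d_Δ ≤ c₁ d^{α/(α+1)}` with `c₁ = (α γ^α)^{−α/(α+1)} (α+1) γ^α`. -/
theorem regret_disagreement_comparison
    {p d : ℕ} (α γ B : ℝ) (hα : 0 ≤ α) (hγ : 0 ≤ γ) (hB : 0 < B)
    (Z : Set (Euc d)) (μ : Measure (Euc p × Euc d)) [IsProbabilityMeasure μ]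
    (fstar pistar pol : Euc p → Euc d)
    (hZ : IsPolyhedron Z)
    (hBZ : ∀ z ∈ Z, ‖z‖ ≤ B)
    (hfin : (Set.extremePoints ℝ Z).Finite)
    (hY : ∀ᵐ xy ∂μ, ‖xy.2‖ ≤ 1)
    (hf : IsCondMean μ fstar)
    (hnoise : NoiseCondition Z B μ fstar α γ)
    (hunique : μ {xy | (optSet Z fstar xy.1).Nontrivial} = 0)
    (hstar : IsOptPolicy Z fstar pistar) (hmstar : Measurable pistar)
    (hpol : ∀ x, pol x ∈ Set.extremePoints ℝ Z) (hmpol : Measurable pol) :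
    (1 / B) * ∫ xy, ⟪fstar xy.1, pol xy.1 - pistar xy.1⟫_ℝ ∂μ
        ≤ 2 * (μ {xy | pol xy.1 ≠ pistar xy.1}).toReal ∧
      (μ {xy | pol xy.1 ≠ pistar xy.1}).toReal
        ≤ ((α * γ ^ α) ^ (-(α / (α + 1)))) * (α + 1) * γ ^ α
            * (((1 / B) * ∫ xy, ⟪fstar xy.1, pol xy.1 - pistar xy.1⟫_ℝ ∂μ)
                ^ (α / (α + 1))) := by
  classical
  have hEZ : Set.extremePoints ℝ Z ⊆ Z := extremePoints_subset
  have hpolZ : ∀ x, pol x ∈ Z := fun x => hEZ (hpol x)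
  have hstarZ : ∀ x, pistar x ∈ Z := fun x => hEZ (hstar x).1
  have hnormE : ∀ x, ‖pol x - pistar x‖ ≤ 2 * B := fun x => by
    calc ‖pol x - pistar x‖ ≤ ‖pol x‖ + ‖pistar x‖ := norm_sub_le _ _
      _ ≤ B + B := add_le_add (hBZ _ (hpolZ x)) (hBZ _ (hstarZ x))
      _ = 2 * B := by ring
  have hRnn : ∀ xy : Euc p × Euc d, 0 ≤ ⟪fstar xy.1, pol xy.1 - pistar xy.1⟫_ℝ := by
    intro xy
    rw [inner_sub_right]
    have := (hstar xy.1).2 (pol xy.1) (hpolZ xy.1)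
    linarith
  have hmf := hf.1
  have hbound := ae_norm_fstar_le μ hf hY
  have hintf : Integrable (fun xy : Euc p × Euc d => fstar xy.1) μ :=
    Integrable.mono' (integrable_const (Real.sqrt d))
      (hmf.comp measurable_fst).aestronglyMeasurable hbound
  have hintY : Integrable (fun xy : Euc p × Euc d => xy.2) μ :=
    Integrable.mono' (integrable_const 1) measurable_snd.aestronglyMeasurable hY
  have hmR : Measurable fun xy : Euc p × Euc d => ⟪fstar xy.1, pol xy.1 - pistar xy.1⟫_ℝ :=
    (hmf.comp measurable_fst).inner
      ((hmpol.comp measurable_fst).sub (hmstar.comp measurable_fst))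
  have hintR : Integrable (fun xy : Euc p × Euc d =>
      ⟪fstar xy.1, pol xy.1 - pistar xy.1⟫_ℝ) μ := by
    refine Integrable.mono' (integrable_const (Real.sqrt d * (2 * B)))
      hmR.aestronglyMeasurable ?_
    filter_upwards [hbound] with xy h
    calc ‖⟪fstar xy.1, pol xy.1 - pistar xy.1⟫_ℝ‖
        ≤ ‖fstar xy.1‖ * ‖pol xy.1 - pistar xy.1‖ := norm_inner_le_norm _ _
      _ ≤ Real.sqrt d * (2 * B) :=
          mul_le_mul h (hnormE _) (norm_nonneg _) (Real.sqrt_nonneg _)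
  set S : Set (Euc p × Euc d) := {xy | pol xy.1 ≠ pistar xy.1} with hSdef
  have hSm : MeasurableSet S := by
    have : MeasurableSet {xy : Euc p × Euc d | pol xy.1 = pistar xy.1} :=
      measurableSet_eq_fun (hmpol.comp measurable_fst) (hmstar.comp measurable_fst)
    exact this.compl
  set I := ∫ xy, ⟪fstar xy.1, pol xy.1 - pistar xy.1⟫_ℝ ∂μ with hIdef
  have hInn : 0 ≤ I := integral_nonneg hRnn
  -- integrability of policy inner products
  have hintP : ∀ h : Euc p → Euc d, Measurable h → (∀ x, h x ∈ Set.extremePoints ℝ Z) →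
      Integrable (fun xy : Euc p × Euc d => ⟪fstar xy.1, h xy.1⟫_ℝ) μ ∧
      Integrable (fun xy : Euc p × Euc d => ⟪xy.2, h xy.1⟫_ℝ) μ := by
    intro h hmh hmem
    have hb : ∀ x, ‖h x‖ ≤ B := fun x => hBZ _ (hEZ (hmem x))
    constructor
    · refine Integrable.mono' (integrable_const (Real.sqrt d * B))
        ((hmf.comp measurable_fst).inner (hmh.comp measurable_fst)).aestronglyMeasurable ?_
      filter_upwards [hbound] with xy hx
      calc ‖⟪fstar xy.1, h xy.1⟫_ℝ‖ ≤ ‖fstar xy.1‖ * ‖h xy.1‖ := norm_inner_le_norm _ _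
        _ ≤ Real.sqrt d * B := mul_le_mul hx (hb _) (norm_nonneg _) (Real.sqrt_nonneg _)
    · refine Integrable.mono' (integrable_const (1 * B))
        (measurable_snd.inner (hmh.comp measurable_fst)).aestronglyMeasurable ?_
      filter_upwards [hY] with xy hx
      calc ‖⟪xy.2, h xy.1⟫_ℝ‖ ≤ ‖xy.2‖ * ‖h xy.1‖ := norm_inner_le_norm _ _
        _ ≤ 1 * B := mul_le_mul hx (hb _) (norm_nonneg _) zero_le_one
  have hmemF : ∀ (h : Euc p → Euc d), (∀ x, h x ∈ Set.extremePoints ℝ Z) →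
      ∀ x, h x ∈ hfin.toFinset := fun h hmem x => hfin.mem_toFinset.2 (hmem x)
  have hswitch : ∀ h : Euc p → Euc d, Measurable h → (∀ x, h x ∈ Set.extremePoints ℝ Z) →
      ∫ xy, ⟪fstar xy.1, h xy.1⟫_ℝ ∂μ = ∫ xy, ⟪xy.2, h xy.1⟫_ℝ ∂μ := by
    intro h hmh hmem
    rw [integral_inner_finrange μ _ hintf h hmh hfin.toFinset (hmemF h hmem),
      integral_inner_finrange μ _ hintY h hmh hfin.toFinset (hmemF h hmem)]
    refine Finset.sum_congr rfl fun v _ => ?_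
    rw [hf.2 (h ⁻¹' {v}) (hmh (measurableSet_singleton v))]
  have hswap : I = ∫ xy, ⟪xy.2, pol xy.1 - pistar xy.1⟫_ℝ ∂μ := by
    have e1 : I = (∫ xy, ⟪fstar xy.1, pol xy.1⟫_ℝ ∂μ)
        - ∫ xy, ⟪fstar xy.1, pistar xy.1⟫_ℝ ∂μ := by
      rw [hIdef, ← integral_sub (hintP pol hmpol hpol).1 (hintP pistar hmstar (fun x => (hstar x).1)).1]
      exact integral_congr_ae (Filter.Eventually.of_forall fun xy => by simp [inner_sub_right])
    have e2 : ∫ xy, ⟪xy.2, pol xy.1 - pistar xy.1⟫_ℝ ∂μ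
        = (∫ xy, ⟪xy.2, pol xy.1⟫_ℝ ∂μ) - ∫ xy, ⟪xy.2, pistar xy.1⟫_ℝ ∂μ := by
      rw [← integral_sub (hintP pol hmpol hpol).2 (hintP pistar hmstar (fun x => (hstar x).1)).2]
      exact integral_congr_ae (Filter.Eventually.of_forall fun xy => by simp [inner_sub_right])
    rw [e1, e2, hswitch pol hmpol hpol, hswitch pistar hmstar (fun x => (hstar x).1)]
  -- Part (i)
  have part1 : (1 / B) * I ≤ 2 * (μ S).toReal := by
    have hle : ∫ xy, ⟪xy.2, pol xy.1 - pistar xy.1⟫_ℝ ∂μ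
        ≤ ∫ xy, S.indicator (fun _ => 2 * B) xy ∂μ := by
      refine integral_mono_ae ?_ ((integrable_const (2 * B)).indicator hSm) ?_
      · refine Integrable.mono' (integrable_const (1 * (2 * B)))
          (measurable_snd.inner
            ((hmpol.comp measurable_fst).sub (hmstar.comp measurable_fst))).aestronglyMeasurable ?_
        filter_upwards [hY] with xy hx
        calc ‖⟪xy.2, pol xy.1 - pistar xy.1⟫_ℝ‖ ≤ ‖xy.2‖ * ‖pol xy.1 - pistar xy.1‖ :=
              norm_inner_le_norm _ _
          _ ≤ 1 * (2 * B) := mul_le_mul hx (hnormE _) (norm_nonneg _) zero_le_one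
      · filter_upwards [hY] with xy hy
        by_cases hxy : pol xy.1 = pistar xy.1
        · have h0 : pol xy.1 - pistar xy.1 = 0 := sub_eq_zero.2 hxy
          have hnot : xy ∉ S := by simp [hSdef, hxy]
          rw [Set.indicator_of_notMem hnot, h0, inner_zero_right]
        · have hmem : xy ∈ S := hxy
          rw [Set.indicator_of_mem hmem]
          calc ⟪xy.2, pol xy.1 - pistar xy.1⟫_ℝ
              ≤ ‖xy.2‖ * ‖pol xy.1 - pistar xy.1‖ := real_inner_le_norm _ _
            _ ≤ 1 * (2 * B) := mul_le_mul hy (hnormE _) (norm_nonneg _) zero_le_one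
            _ = 2 * B := one_mul _
    have hind : ∫ xy, S.indicator (fun _ => (2 * B : ℝ)) xy ∂μ = 2 * B * (μ S).toReal := by
      rw [integral_indicator hSm, setIntegral_const, smul_eq_mul, mul_comm]; rfl
    have h5 : I ≤ 2 * B * (μ S).toReal := by
      rw [hswap]
      exact hle.trans_eq hind
    have hBinv : (0:ℝ) < 1 / B := by positivity
    calc (1 / B) * I ≤ (1 / B) * (2 * B * (μ S).toReal) :=
          mul_le_mul_of_nonneg_left h5 hBinv.le
      _ = 2 * (μ S).toReal := by field_simp
  refine ⟨part1, ?_⟩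
  -- a.e. gap facts on S
  have hgap : ∀ᵐ xy ∂μ, xy ∈ S → (0 < gapFn Z fstar xy.1 ∧
      gapFn Z fstar xy.1 ≤ ⟪fstar xy.1, pol xy.1 - pistar xy.1⟫_ℝ) := by
    have huniq : ∀ᵐ xy ∂μ, ¬ (optSet Z fstar xy.1).Nontrivial := by
      rw [ae_iff]
      simpa using hunique
    filter_upwards [huniq] with xy hu hxyS
    have hxne : pol xy.1 ≠ pistar xy.1 := hxyS
    set x := xy.1 with hx
    set c := fstar x with hc
    have hstarOpt : pistar x ∈ optSet Z fstar x := ⟨hstarZ x, (hstar x).2⟩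
    have hpolNot : pol x ∉ optSet Z fstar x := by
      intro hmem
      exact hu ⟨pol x, hmem, pistar x, hstarOpt, hxne⟩
    have hne : optSet Z fstar x ≠ Z := by
      intro h
      exact hpolNot (by rw [h]; exact hpolZ x)
    have hsInfZ : sInf ((fun z => ⟪c, z⟫_ℝ) '' Z) = ⟪c, pistar x⟫_ℝ := by
      refine le_antisymm (csInf_le ⟨⟪c, pistar x⟫_ℝ, ?_⟩ ⟨pistar x, hstarZ x, rfl⟩)
        (le_csInf ⟨_, pistar x, hstarZ x, rfl⟩ ?_)
      · rintro _ ⟨z, hz, rfl⟩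
        exact (hstar x).2 z hz
      · rintro _ ⟨z, hz, rfl⟩
        exact (hstar x).2 z hz
    set Enon := Set.extremePoints ℝ Z \ optSet Z fstar x with hEnon
    have hpolE : pol x ∈ Enon := ⟨hpol x, hpolNot⟩
    have hfinE : ((fun z => ⟪c, z⟫_ℝ) '' Enon).Finite := (hfin.diff).image _
    have hneE : ((fun z => ⟪c, z⟫_ℝ) '' Enon).Nonempty := ⟨_, pol x, hpolE, rfl⟩
    obtain ⟨z1, hz1, hz1eq⟩ := hneE.csInf_mem hfinE
    have hz1Z : z1 ∈ Z := hEZ hz1.1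
    have hz1not : ¬ ∀ z' ∈ Z, ⟪c, z1⟫_ℝ ≤ ⟪c, z'⟫_ℝ := fun hforall => hz1.2 ⟨hz1Z, hforall⟩
    push_neg at hz1not
    obtain ⟨z', hz'Z, hz'lt⟩ := hz1not
    have hlow : ⟪c, pistar x⟫_ℝ < sInf ((fun z => ⟪c, z⟫_ℝ) '' Enon) := by
      rw [← hz1eq]
      calc ⟪c, pistar x⟫_ℝ ≤ ⟪c, z'⟫_ℝ := (hstar x).2 z' hz'Z
        _ < ⟪c, z1⟫_ℝ := hz'lt
    have hgapeq : gapFn Z fstar x = sInf ((fun z => ⟪c, z⟫_ℝ) '' Enon) - ⟪c, pistar x⟫_ℝ := by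
      simp only [gapFn, if_neg hne]
      rw [hsInfZ]
    have hub : sInf ((fun z => ⟪c, z⟫_ℝ) '' Enon) ≤ ⟪c, pol x⟫_ℝ :=
      csInf_le hfinE.bddBelow ⟨pol x, hpolE, rfl⟩
    refine ⟨by rw [hgapeq]; linarith, ?_⟩
    rw [hgapeq, inner_sub_right]
    linarith
  -- Claim A
  have claimA : ∀ δ : ℝ, 0 < δ → (μ S).toReal ≤ I / δ + (γ * δ / B) ^ α := by
    intro δ hδ
    set A1 : Set (Euc p × Euc d) :=
      {xy | δ ≤ ⟪fstar xy.1, pol xy.1 - pistar xy.1⟫_ℝ} with hA1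
    set A2 : Set (Euc p × Euc d) :=
      {xy | 0 < gapFn Z fstar xy.1 ∧ gapFn Z fstar xy.1 ≤ δ} with hA2
    have hae : ∀ᵐ xy ∂μ, xy ∉ S \ (A1 ∪ A2) := by
      filter_upwards [hgap] with xy h
      rintro ⟨hS', hn⟩
      refine hn ?_
      rcases le_or_gt (gapFn Z fstar xy.1) δ with h1 | h1
      · exact Or.inr ⟨(h hS').1, h1⟩
      · exact Or.inl (le_trans h1.le (h hS').2)
    have hsub0 : μ (S \ (A1 ∪ A2)) = 0 := by
      refine measure_mono_null (fun x hx => ?_) (ae_iff.1 hae)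
      simp only [Set.mem_setOf_eq, not_not]
      exact hx
    have hm1 : μ S ≤ μ A1 + μ A2 := by
      calc μ S ≤ μ ((A1 ∪ A2) ∪ (S \ (A1 ∪ A2))) := by
            refine measure_mono fun x hx => ?_
            by_cases h : x ∈ A1 ∪ A2
            · exact Or.inl h
            · exact Or.inr ⟨hx, h⟩
        _ ≤ μ (A1 ∪ A2) + μ (S \ (A1 ∪ A2)) := measure_union_le _ _
        _ = μ (A1 ∪ A2) := by rw [hsub0, add_zero]
        _ ≤ μ A1 + μ A2 := measure_union_le _ _
    have hA1b : (μ A1).toReal ≤ I / δ := by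
      have hmarkov := mul_meas_ge_le_integral_of_nonneg
        (Filter.Eventually.of_forall hRnn) hintR δ
      rw [le_div_iff₀ hδ]
      calc (μ A1).toReal * δ = δ * (μ A1).toReal := mul_comm _ _
        _ ≤ I := by rw [hIdef]; exact hmarkov
    have hA2b : (μ A2).toReal ≤ (γ * δ / B) ^ α :=
      ENNReal.toReal_le_of_le_ofReal (Real.rpow_nonneg (by positivity) _) (hnoise δ hδ)
    have hsum : (μ S).toReal ≤ (μ A1).toReal + (μ A2).toReal := by
      have hfin2 : μ A1 + μ A2 ≠ ⊤ :=
        ENNReal.add_ne_top.2 ⟨measure_ne_top μ _, measure_ne_top μ _⟩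
      have := ENNReal.toReal_mono hfin2 hm1
      rwa [ENNReal.toReal_add (measure_ne_top μ _) (measure_ne_top μ _)] at this
    linarith
  -- Case α = 0
  by_cases hα0 : α = 0
  · subst hα0
    have hprob : (μ S).toReal ≤ 1 := by
      have h1 : μ S ≤ 1 := prob_le_one
      calc (μ S).toReal ≤ (1 : ℝ≥0∞).toReal := ENNReal.toReal_mono ENNReal.one_ne_top h1
        _ = 1 := by simp
    have : ((0 : ℝ) / (0 + 1)) = 0 := by norm_num
    rw [this]
    simp only [Real.rpow_zero, neg_zero, mul_one, one_mul, zero_add]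
    linarith
  have hαpos : 0 < α := hα.lt_of_ne (Ne.symm hα0)
  have hspos : 0 < α + 1 := by linarith
  -- degenerate cases γ = 0 or I = 0
  by_cases hdeg : γ = 0 ∨ I = 0
  · have hS0 : (μ S).toReal ≤ 0 := by
      have key : ∀ ε : ℝ, 0 < ε → (μ S).toReal ≤ 0 + ε := by
        intro ε hε
        rcases eq_or_lt_of_le hγ with hγ0 | hγpos
        · have hc := claimA ((I + 1) / ε) (div_pos (by linarith) hε)
          rw [← hγ0] at hc
          have hz : ((0 : ℝ) * ((I + 1) / ε) / B) ^ α = 0 := by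
            rw [zero_mul, zero_div, Real.zero_rpow (ne_of_gt hαpos)]
          rw [hz] at hc
          have hd : I / ((I + 1) / ε) ≤ ε := by
            rw [div_div_eq_mul_div, mul_div_assoc]
            calc I * (ε / (I + 1)) ≤ (I + 1) * (ε / (I + 1)) := by
                  refine mul_le_mul_of_nonneg_right (by linarith) (by positivity)
              _ = ε := by field_simp
          linarith
        · have hI0 : I = 0 := by
            rcases hdeg with h | h
            · exact absurd h.symm (ne_of_lt hγpos)
            · exact h
          set δ := B * ε ^ ((1:ℝ)/α) / γ with hδdef
          have hδpos : 0 < δ := by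
            have : (0:ℝ) < ε ^ ((1:ℝ)/α) := Real.rpow_pos_of_pos hε _
            positivity
          have hc := claimA δ hδpos
          rw [hI0] at hc
          have hq : γ * δ / B = ε ^ ((1:ℝ)/α) := by
            rw [hδdef]
            field_simp
          have hr : (γ * δ / B) ^ α = ε := by
            rw [hq, ← Real.rpow_mul hε.le, one_div_mul_cancel (ne_of_gt hαpos), Real.rpow_one]
          rw [hr, zero_div] at hc
          linarith
      linarith [le_of_forall_pos_le_add key]
    have hS0' : (μ S).toReal = 0 := le_antisymm hS0 ENNReal.toReal_nonneg
    rw [hS0']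
    have h1 : (0:ℝ) ≤ (α * γ ^ α) ^ (-(α / (α + 1))) :=
      Real.rpow_nonneg (mul_nonneg hα (Real.rpow_nonneg hγ _)) _
    have h2 : (0:ℝ) ≤ γ ^ α := Real.rpow_nonneg hγ _
    have h3 : (0:ℝ) ≤ ((1 / B) * I) ^ (α / (α + 1)) :=
      Real.rpow_nonneg (mul_nonneg (by positivity) hInn) _
    exact mul_nonneg (mul_nonneg (mul_nonneg h1 (by linarith)) h2) h3
  -- main case
  push_neg at hdeg
  obtain ⟨hγne, hIne⟩ := hdeg
  have hγpos : 0 < γ := hγ.lt_of_ne (Ne.symm hγne)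
  have hIpos : 0 < I := hInn.lt_of_ne (Ne.symm hIne)
  have hgα : 0 < γ ^ α := Real.rpow_pos_of_pos hγpos α
  set D := (1 / B) * I with hDdef
  have hDpos : 0 < D := by positivity
  set K := α * γ ^ α with hKdef
  have hKpos : 0 < K := by positivity
  have htpos : 0 < D / K := by positivity
  set δ0 := B * (D / K) ^ ((1:ℝ)/(α + 1)) with hδ0def
  have hq0 : 0 < (D / K) ^ ((1:ℝ)/(α + 1)) := Real.rpow_pos_of_pos htpos _
  have hδ0pos : 0 < δ0 := by positivity
  have h1 := claimA δ0 hδ0pos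
  have hKe : 0 < K ^ ((1:ℝ)/(α+1)) := Real.rpow_pos_of_pos hKpos _
  have e1 : I / δ0 = K ^ ((1:ℝ)/(α + 1)) * D ^ (α/(α + 1)) := by
    rw [div_eq_iff (ne_of_gt hδ0pos), hδ0def, Real.div_rpow hDpos.le hKpos.le]
    symm
    have hD1 : D ^ (α/(α+1)) * D ^ ((1:ℝ)/(α+1)) = D := by
      rw [← Real.rpow_add hDpos]
      have : α/(α+1) + (1:ℝ)/(α+1) = 1 := by field_simp
      rw [this, Real.rpow_one]
    calc K ^ ((1:ℝ)/(α + 1)) * D ^ (α/(α + 1))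
          * (B * (D ^ ((1:ℝ)/(α+1)) / K ^ ((1:ℝ)/(α+1))))
        = B * (D ^ (α/(α+1)) * D ^ ((1:ℝ)/(α+1)))
          * (K ^ ((1:ℝ)/(α+1)) / K ^ ((1:ℝ)/(α+1))) := by ring
      _ = B * D := by rw [div_self (ne_of_gt hKe), hD1, mul_one]
      _ = I := by rw [hDdef]; field_simp
  have e2 : (γ * δ0 / B) ^ α = γ ^ α * (D ^ (α/(α+1)) / K ^ (α/(α+1))) := by
    have hq : γ * δ0 / B = γ * (D / K) ^ ((1:ℝ)/(α + 1)) := by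
      rw [hδ0def]
      field_simp
    rw [hq, Real.mul_rpow hγ hq0.le, ← Real.rpow_mul htpos.le]
    have hexp : (1:ℝ)/(α+1) * α = α/(α+1) := by ring
    rw [hexp, Real.div_rpow hDpos.le hKpos.le]
  have h1s : (1:ℝ)/(α+1) = 1 + -(α/(α+1)) := by
    have hne : α + 1 ≠ 0 := ne_of_gt hspos
    field_simp
    ring
  calc (μ S).toReal ≤ I / δ0 + (γ * δ0 / B) ^ α := h1
    _ = K ^ (-(α/(α+1))) * (α + 1) * γ ^ α * D ^ (α/(α+1)) := by
        rw [e1, e2, h1s, Real.rpow_add hKpos, Real.rpow_one,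
          Real.rpow_neg hKpos.le, hKdef]
        ring
end
end
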